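/- If there exists ρ ∈ ℝ such that P_0 + ρ AᵀA ⪰ 0, then for every pair (x, X) with X symmetric, X ⪰ x xᵀ, Ax = b, and AX = b xᵀ, one has tr(P_0 X) ≥ xᵀ P_0 x. -/

import Mathlib

open Matrix

lemma psd_trace_nonneg {k : ℕ} {M : Matrix (Fin k) (Fin k) ℝ}
    (hM : M.PosSemidef) : 0 ≤ M.trace := by
  rw [Matrix.trace]
  apply Finset.sum_nonneg
  intro i _
  have := hM.2 (Finsupp.single i 1)
  simpa [Matrix.mulVec, dotProduct, Pi.single_apply] using this

open scoped MatrixOrder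

lemma psd_trace_mul_nonneg {k : ℕ} {P Q : Matrix (Fin k) (Fin k) ℝ}
    (hP : P.PosSemidef) (hQ : Q.PosSemidef) : 0 ≤ (P * Q).trace := by
  have hS : Q = CFC.sqrt Q * CFC.sqrt Q := (CFC.sqrt_mul_sqrt_self Q hQ.nonneg).symm
  have herm : (CFC.sqrt Q).conjTranspose = CFC.sqrt Q := (CFC.sqrt_nonneg Q).posSemidef.1
  have : (P * Q).trace = ((CFC.sqrt Q)ᴴ * P * CFC.sqrt Q).trace := by
    rw [herm]
    conv_lhs => rw [hS]
    rw [← Matrix.mul_assoc, Matrix.trace_mul_cycle]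
  rw [this]
  exact psd_trace_nonneg (hP.conjTranspose_mul_mul_same _)

lemma mul_vecMulVec {k l : ℕ} (A : Matrix (Fin k) (Fin l) ℝ) (u : Fin l → ℝ) (v : Fin l → ℝ) :
    A * Matrix.vecMulVec u v = Matrix.vecMulVec (A.mulVec u) v := by
  ext i j
  simp [Matrix.mul_apply, Matrix.vecMulVec_apply, Matrix.mulVec, dotProduct,
    Finset.sum_mul, mul_assoc]

lemma trace_mul_vecMulVec {k : ℕ} (P : Matrix (Fin k) (Fin k) ℝ) (u v : Fin k → ℝ) :
    (P * Matrix.vecMulVec u v).trace = v ⬝ᵥ P.mulVec u := by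
  simp [Matrix.trace, Matrix.diag, Matrix.mul_apply, Matrix.vecMulVec_apply,
    Matrix.mulVec, dotProduct, Finset.mul_sum, mul_comm, mul_left_comm]

/-- If `P₀ + ρ AᵀA ⪰ 0` for some `ρ`, then `tr(P₀ X) ≥ xᵀ P₀ x` for every pair
`(x, X)` with `X` symmetric, `X ⪰ x xᵀ`, `Ax = b` and `AX = b xᵀ`. -/
theorem trace_ge_quadForm_of_finsler {n m : ℕ}
    (P0 : Matrix (Fin n) (Fin n) ℝ) (hP0 : P0.IsSymm)
    (A : Matrix (Fin m) (Fin n) ℝ) (b : Fin m → ℝ)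
    (ρ : ℝ) (hρ : (P0 + ρ • (Aᵀ * A)).PosSemidef)
    (x : Fin n → ℝ) (X : Matrix (Fin n) (Fin n) ℝ) (hX : X.IsSymm)
    (hrelax : (X - Matrix.vecMulVec x x).PosSemidef)
    (hAx : A.mulVec x = b) (hAX : A * X = Matrix.vecMulVec b x) :
    x ⬝ᵥ P0.mulVec x ≤ (P0 * X).trace := by
  set M := X - Matrix.vecMulVec x x with hM
  have hAM : A * M = 0 := by
    rw [hM, Matrix.mul_sub, hAX, mul_vecMulVec, hAx, sub_self]
  have key : 0 ≤ ((P0 + ρ • (Aᵀ * A)) * M).trace :=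
    psd_trace_mul_nonneg hρ hrelax
  have h2 : ((P0 + ρ • (Aᵀ * A)) * M).trace = (P0 * M).trace := by
    rw [Matrix.add_mul, Matrix.smul_mul, Matrix.mul_assoc, hAM, Matrix.mul_zero,
      smul_zero, add_zero]
  have h3 : (P0 * M).trace = (P0 * X).trace - x ⬝ᵥ P0.mulVec x := by
    rw [hM, Matrix.mul_sub, Matrix.trace_sub, trace_mul_vecMulVec]
  rw [h2, h3] at key
  linarith
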